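/- Let P be a finite poset and let A, B, C, D be four pairwise distinct filters of P. If conv(χ_A, χ_B, χ_C, χ_D) is a square face of the order polytope O(P), then the poset ({A, B, C, D}, ⊆) is isomorphic to the 4-element 'diamond' poset having a unique bottom element, a unique top element, and two incomparable middle elements (with the bottom below both middle elements and both middle elements below the top). -/

import Mathlib

open Set

namespace Paper

variable {P : Type*}

/-- The characteristic vector of a subset of `P`, as an element of `ℝ^P`. -/
noncomputable def chi (W : Set P) : P → ℝ := W.indicator 1

/-- A subset `S` of a poset is connected if it is non-empty and any two of its
elements are joined by a finite sequence inside `S` of consecutively comparable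
elements. -/
def ConnSub [PartialOrder P] (S : Set P) : Prop :=
  S.Nonempty ∧ ∀ x ∈ S, ∀ y ∈ S,
    Relation.ReflTransGen (fun a b : P => a ∈ S ∧ b ∈ S ∧ (a ≤ b ∨ b ≤ a)) x y

/-- Up-closure `⟨S⟩↑` of a subset of a poset. -/
def upCl [PartialOrder P] (S : Set P) : Set P := {y | ∃ x ∈ S, x ≤ y}

/-- Down-closure `⟨S⟩↓` of a subset of a poset. -/
def dnCl [PartialOrder P] (S : Set P) : Set P := {y | ∃ x ∈ S, y ≤ x}

/-- Minimal elements of a subset of a poset. -/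
def minOf [PartialOrder P] (S : Set P) : Set P := {x | x ∈ S ∧ ∀ y ∈ S, y ≤ x → y = x}

/-- Maximal elements of a subset of a poset. -/
def maxOf [PartialOrder P] (S : Set P) : Set P := {x | x ∈ S ∧ ∀ y ∈ S, x ≤ y → x = y}

/-- `A ∥ B` : every element of `A` is incomparable to every element of `B`. -/
def IsParallel [PartialOrder P] (A B : Set P) : Prop :=
  ∀ a ∈ A, ∀ b ∈ B, ¬ a ≤ b ∧ ¬ b ≤ a

/-- Order-convexity of a subset of a poset. -/
def OrdConvex [PartialOrder P] (Q : Set P) : Prop :=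
  ∀ ⦃x y z : P⦄, x ∈ Q → z ∈ Q → x ≤ y → y ≤ z → y ∈ Q

/-- A poset is `X`-free if it contains no five elements `d₁, d₂ < e < u₁, u₂` with
`d₁ ∥ d₂` and `u₁ ∥ u₂`. -/
def XFree (P : Type*) [PartialOrder P] : Prop :=
  ¬ ∃ d₁ d₂ e u₁ u₂ : P, d₁ < e ∧ d₂ < e ∧ e < u₁ ∧ e < u₂ ∧
      ¬ d₁ ≤ d₂ ∧ ¬ d₂ ≤ d₁ ∧ ¬ u₁ ≤ u₂ ∧ ¬ u₂ ≤ u₁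

/-- The order polytope of a poset. -/
def orderPolytope (P : Type*) [PartialOrder P] : Set (P → ℝ) :=
  {x | (∀ p : P, 0 ≤ x p ∧ x p ≤ 1) ∧ ∀ p q : P, p ≤ q → x p ≤ x q}

/-- The chain polytope of a finite poset. -/
def chainPolytope (P : Type*) [Fintype P] [PartialOrder P] : Set (P → ℝ) :=
  {x | (∀ p : P, 0 ≤ x p) ∧
       ∀ c : Finset P, IsChain (· ≤ ·) (↑c : Set P) → ∑ p ∈ c, x p ≤ 1}

/-- The dimension of a subset of a real vector space: the dimension of its affine span. -/
noncomputable def sdim {V : Type*} [AddCommGroup V] [Module ℝ V] (s : Set V) : ℕ :=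
  Module.finrank ℝ (vectorSpan ℝ s)

/-- `F` is a face of the polytope `K`. -/
def IsFaceOf {V : Type*} [AddCommGroup V] [Module ℝ V] (K F : Set V) : Prop :=
  IsExtreme ℝ K F

/-- `T` is a triangular 2-dimensional face of `K`. -/
def IsTriangleFaceOf {V : Type*} [AddCommGroup V] [Module ℝ V] (K T : Set V) : Prop :=
  IsFaceOf K T ∧ sdim T = 2 ∧ (Set.extremePoints ℝ T).ncard = 3

/-- `T` is a square 2-dimensional face of `K`. -/
def IsSquareFaceOf {V : Type*} [AddCommGroup V] [Module ℝ V] (K T : Set V) : Prop :=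
  IsFaceOf K T ∧ sdim T = 2 ∧ (Set.extremePoints ℝ T).ncard = 4

/-- `T` is a 2-dimensional face of `K`. -/
def IsTwoFaceOf {V : Type*} [AddCommGroup V] [Module ℝ V] (K T : Set V) : Prop :=
  IsFaceOf K T ∧ sdim T = 2

end Paper

open Paper
section Aux

variable {P : Type}

lemma chi_inj : Function.Injective (chi (P := P)) := by
  intro A B h
  ext p
  have := congrFun h p
  by_cases hA : p ∈ A <;> by_cases hB : p ∈ B <;>
    simp_all [chi, Set.indicator_apply]

lemma chi_add_chi (X Y : Set P) : chi (X ∩ Y) + chi (X ∪ Y) = chi X + chi Y := by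
  funext p
  by_cases hX : p ∈ X <;> by_cases hY : p ∈ Y <;>
    simp [chi, Set.indicator_apply, hX, hY]

lemma chi_zero_or_one (W : Set P) (p : P) : chi W p = 0 ∨ chi W p = 1 := by
  by_cases h : p ∈ W <;> simp [chi, Set.indicator_apply, h]

lemma chi_mem_orderPolytope [PartialOrder P] {W : Set P} (hW : IsUpperSet W) :
    chi W ∈ orderPolytope P := by
  constructor
  · intro p
    by_cases h : p ∈ W <;> simp [chi, Set.indicator_apply, h]
  · intro p q hpq
    by_cases h : p ∈ W
    · have hq : q ∈ W := hW hpq h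
      simp [chi, Set.indicator_apply, h, hq]
    · simp [chi, Set.indicator_apply, h]
      by_cases hq : q ∈ W <;> simp [hq]

/-- A 0/1 point belonging to a subset of the order polytope is an extreme point of it. -/
lemma chi_extremePoint [PartialOrder P] {F : Set (P → ℝ)} (hFO : F ⊆ orderPolytope P)
    {W : Set P} (hW : chi W ∈ F) : chi W ∈ F.extremePoints ℝ := by
  refine ⟨hW, ?_⟩
  intro y hy z hz hseg
  obtain ⟨a, b, ha, hb, hab, habz⟩ := hseg
  have hy' := (hFO hy).1
  have hz' := (hFO hz).1
  have hcoord : ∀ p, y p = chi W p ∧ z p = chi W p := by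
    intro p
    have heq : a * y p + b * z p = chi W p := by
      have := congrFun habz p
      simpa using this
    rcases chi_zero_or_one W p with h | h <;> rw [h] at heq <;>
      constructor <;> rw [h] <;>
      nlinarith [(hy' p).1, (hy' p).2, (hz' p).1, (hz' p).2]
  exact funext fun p => (hcoord p).1

lemma extreme_mem_of_mem_convexHull {E : Type*} [AddCommGroup E] [Module ℝ E]
    {F t : Set E} {x : E} (hFc : Convex ℝ F) (hx : x ∈ F.extremePoints ℝ) (ht : t ⊆ F)
    (hxt : x ∈ convexHull ℝ t) : x ∈ t := by
  have hsub : convexHull ℝ t ⊆ F := convexHull_min ht hFc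
  have : x ∈ (convexHull ℝ t).extremePoints ℝ :=
    ⟨hxt, fun y hy z hz hseg => hx.2 (hsub hy) (hsub hz) hseg⟩
  exact extremePoints_convexHull_subset this

end Aux
lemma pair_eq {P : Type} {W X Y Z : Set P} {a b c d : ℝ} (ha : 0 < a) (hb : 0 < b)
    (hc : 0 < c) (hd : 0 < d) (hs : a + b = c + d) (hWX : W ⊆ X) (hYZ : Y ⊆ Z)
    (heq : a • chi W + b • chi X = c • chi Y + d • chi Z) : W = Y ∧ X = Z := by
  have hp : ∀ p : P, a * chi W p + b * chi X p = c * chi Y p + d * chi Z p := by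
    intro p
    have := congrFun heq p
    simpa using this
  constructor <;> ext p <;>
  · have h := hp p
    by_cases h1 : p ∈ W <;> by_cases h2 : p ∈ X <;> by_cases h3 : p ∈ Y <;>
      by_cases h4 : p ∈ Z <;>
      simp [chi, Set.indicator_apply, h1, h2, h3, h4] at h ⊢ <;>
      first
        | linarith
        | exact h2 (hWX h1)
        | exact h4 (hYZ h3)
lemma not_single {E : Type*} [AddCommGroup E] [Module ℝ E] {F : Set E} (hFc : Convex ℝ F)
    {q : Fin 4 → E} (hq : ∀ i, q i ∈ F.extremePoints ℝ) (hqinj : Function.Injective q)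
    {t : Finset (Fin 4)} {u : Fin 4 → ℝ} {i : Fin 4} (hit : i ∉ t)
    (hu : ∀ j ∈ t, 0 < u j) (hsum : 0 < ∑ j ∈ t, u j)
    (heq : (∑ j ∈ t, u j) • q i = ∑ j ∈ t, u j • q j) : False := by
  have hcm : q i = t.centerMass u q := by
    rw [Finset.centerMass, ← heq, smul_smul, inv_mul_cancel₀ hsum.ne', one_smul]
  have hmem : q i ∈ convexHull ℝ (q '' ↑t) :=
    hcm ▸ t.centerMass_mem_convexHull (fun j hj => (hu j hj).le) hsum
      (fun j hj => Set.mem_image_of_mem q hj)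
  have hsubF : q '' ↑t ⊆ F := by
    rintro x ⟨j, _, rfl⟩; exact (hq j).1
  obtain ⟨j, hj, hji⟩ := extreme_mem_of_mem_convexHull hFc (hq i) hsubF hmem
  exact hit (hqinj hji ▸ hj)

lemma two_two {E : Type*} [AddCommGroup E] [Module ℝ E] {F : Set E} (hFc : Convex ℝ F)
    {q : Fin 4 → E} (hq : ∀ i, q i ∈ F.extremePoints ℝ) (hqinj : Function.Injective q)
    (hnAI : ¬ AffineIndependent ℝ q) :
    ∃ (i₁ i₂ j₁ j₂ : Fin 4) (a b c d : ℝ),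
      i₁ ≠ i₂ ∧ j₁ ≠ j₂ ∧ i₁ ≠ j₁ ∧ i₁ ≠ j₂ ∧ i₂ ≠ j₁ ∧ i₂ ≠ j₂ ∧
      0 < a ∧ 0 < b ∧ 0 < c ∧ 0 < d ∧ a + b = c + d ∧
      a • q i₁ + b • q i₂ = c • q j₁ + d • q j₂ := by
  classical
  rw [affineIndependent_iff] at hnAI
  push_neg at hnAI
  obtain ⟨s, w, hw0, hwq, e0, he0s, he0⟩ := hnAI
  set w' : Fin 4 → ℝ := fun i => if i ∈ s then w i else 0 with hw'
  have hw'0 : ∑ i, w' i = 0 := by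
    rw [hw', Finset.sum_ite_mem, Finset.univ_inter]; exact hw0
  have hw'q : ∑ i, w' i • q i = 0 := by
    rw [hw']
    simp only [ite_smul, zero_smul]
    rw [Finset.sum_ite_mem, Finset.univ_inter]; exact hwq
  have he0' : w' e0 ≠ 0 := by rw [hw']; simpa [he0s] using he0
  set I : Finset (Fin 4) := Finset.univ.filter (fun i => 0 < w' i) with hI
  set J : Finset (Fin 4) := Finset.univ.filter (fun i => w' i < 0) with hJ
  have hposI : ∀ i ∈ I, 0 < w' i := fun i hi => (Finset.mem_filter.1 hi).2
  have hnegJ : ∀ i ∈ J, w' i < 0 := fun i hi => (Finset.mem_filter.1 hi).2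
  have hsplit1 : ∑ i ∈ I, w' i + ∑ i ∈ J, w' i = 0 := by
    rw [← hw'0]
    rw [hI, hJ, Finset.sum_filter, Finset.sum_filter, ← Finset.sum_add_distrib]
    apply Finset.sum_congr rfl
    intro i _
    rcases lt_trichotomy (w' i) 0 with h | h | h
    · simp [h, asymm h]
    · simp [h]
    · simp [h, asymm h]
  have hsplit2 : ∑ i ∈ I, w' i • q i + ∑ i ∈ J, w' i • q i = 0 := by
    rw [← hw'q]
    rw [hI, hJ, Finset.sum_filter, Finset.sum_filter, ← Finset.sum_add_distrib]
    apply Finset.sum_congr rfl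
    intro i _
    rcases lt_trichotomy (w' i) 0 with h | h | h
    · simp [h, asymm h]
    · simp [h]
    · simp [h, asymm h]
  have hJne : J.Nonempty := by
    rw [Finset.nonempty_iff_ne_empty]
    intro hJe
    have hnonneg : ∀ i ∈ Finset.univ, (0:ℝ) ≤ w' i := by
      intro i _
      by_contra hlt
      push_neg at hlt
      have hiJ : i ∈ J := by rw [hJ]; simp [hlt]
      simp [hJe] at hiJ
    exact he0' ((Finset.sum_eq_zero_iff_of_nonneg hnonneg).1 hw'0 e0 (Finset.mem_univ e0))
  have hIne : I.Nonempty := by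
    rw [Finset.nonempty_iff_ne_empty]
    intro hIe
    have hnonpos : ∀ i ∈ Finset.univ, w' i ≤ (0:ℝ) := by
      intro i _
      by_contra hlt
      push_neg at hlt
      have hiI : i ∈ I := by rw [hI]; simp [hlt]
      simp [hIe] at hiI
    exact he0' ((Finset.sum_eq_zero_iff_of_nonpos hnonpos).1 hw'0 e0 (Finset.mem_univ e0))
  have hsI : 0 < ∑ i ∈ I, w' i := Finset.sum_pos hposI hIne
  have hIJdisj : Disjoint I J := by
    rw [Finset.disjoint_left]
    intro i hiI hiJ
    exact absurd (hposI i hiI) (by linarith [hnegJ i hiJ])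
  have hcard : I.card + J.card ≤ 4 := by
    rw [← Finset.card_union_of_disjoint hIJdisj]
    calc (I ∪ J).card ≤ (Finset.univ : Finset (Fin 4)).card :=
          Finset.card_le_card (Finset.subset_univ _)
      _ = 4 := by simp
  have hInot1 : I.card ≠ 1 := by
    intro h1
    obtain ⟨i, hIi⟩ := Finset.card_eq_one.1 h1
    have hiI : i ∈ I := by rw [hIi]; exact Finset.mem_singleton_self i
    have hwi : ∑ k ∈ I, w' k = w' i := by rw [hIi, Finset.sum_singleton]
    have hqi : ∑ k ∈ I, w' k • q k = w' i • q i := by rw [hIi, Finset.sum_singleton]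
    rw [hwi] at hsplit1
    rw [hqi] at hsplit2
    refine not_single hFc hq hqinj (t := J) (u := fun j => -w' j) (i := i) ?_ ?_ ?_ ?_
    · intro hiJ; exact absurd (hposI i hiI) (by linarith [hnegJ i hiJ])
    · intro j hj; simpa using hnegJ j hj
    · rw [Finset.sum_neg_distrib]; linarith [hposI i hiI]
    · have h1 : ∑ j ∈ J, -w' j = w' i := by rw [Finset.sum_neg_distrib]; linarith
      rw [h1]
      simp only [neg_smul, Finset.sum_neg_distrib]
      exact eq_neg_of_add_eq_zero_left hsplit2
  have hJnot1 : J.card ≠ 1 := by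
    intro h1
    obtain ⟨j, hJj⟩ := Finset.card_eq_one.1 h1
    have hjJ : j ∈ J := by rw [hJj]; exact Finset.mem_singleton_self j
    have hwj : ∑ k ∈ J, w' k = w' j := by rw [hJj, Finset.sum_singleton]
    have hqj : ∑ k ∈ J, w' k • q k = w' j • q j := by rw [hJj, Finset.sum_singleton]
    rw [hwj] at hsplit1
    rw [hqj] at hsplit2
    refine not_single hFc hq hqinj (t := I) (u := w') (i := j) ?_ hposI hsI ?_
    · intro hjI; exact absurd (hposI j hjI) (by linarith [hnegJ j hjJ])
    · have h1 : ∑ k ∈ I, w' k = -w' j := by linarith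
      rw [h1, neg_smul]
      have h3 : ∑ k ∈ I, w' k • q k = -(w' j • q j) := by
        rw [eq_neg_iff_add_eq_zero]; exact hsplit2
      exact h3.symm
  have hI2 : I.card = 2 ∧ J.card = 2 := by
    have h1 := Finset.card_pos.2 hIne
    have h2 := Finset.card_pos.2 hJne
    omega
  obtain ⟨i₁, i₂, hi12, hIpair⟩ := Finset.card_eq_two.1 hI2.1
  obtain ⟨j₁, j₂, hj12, hJpair⟩ := Finset.card_eq_two.1 hI2.2
  have hi₁ : i₁ ∈ I := by rw [hIpair]; simp
  have hi₂ : i₂ ∈ I := by rw [hIpair]; simp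
  have hj₁ : j₁ ∈ J := by rw [hJpair]; simp
  have hj₂ : j₂ ∈ J := by rw [hJpair]; simp
  rw [hIpair, Finset.sum_pair hi12, hJpair, Finset.sum_pair hj12] at hsplit1 hsplit2
  have hne : ∀ i' ∈ I, ∀ j' ∈ J, i' ≠ j' := by
    intro i' hi' j' hj' h
    rw [h] at hi'
    exact absurd (hposI j' hi') (by linarith [hnegJ j' hj'])
  refine ⟨i₁, i₂, j₁, j₂, w' i₁, w' i₂, -w' j₁, -w' j₂, hi12, hj12,
    hne i₁ hi₁ j₁ hj₁, hne i₁ hi₁ j₂ hj₂, hne i₂ hi₂ j₁ hj₁, hne i₂ hi₂ j₂ hj₂,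
    hposI i₁ hi₁, hposI i₂ hi₂, by linarith [hnegJ j₁ hj₁], by linarith [hnegJ j₂ hj₂],
    by linarith, ?_⟩
  rw [neg_smul, neg_smul, ← neg_add]
  exact eq_neg_of_add_eq_zero_left hsplit2

/-- If `A, B, C, D` are pairwise distinct filters of a finite poset `P`
and `conv(χ_A, χ_B, χ_C, χ_D)` is a square face of the order polytope `O(P)`, then the
poset `({A, B, C, D}, ⊆)` is a diamond: it has a bottom element, a top element, and two
incomparable middle elements. -/
theorem statement13 (P : Type) [Fintype P] [PartialOrder P] (A B C D : Set P)
    (hA : IsUpperSet A) (hB : IsUpperSet B) (hC : IsUpperSet C) (hD : IsUpperSet D)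
    (hAB : A ≠ B) (hAC : A ≠ C) (hAD : A ≠ D) (hBC : B ≠ C) (hBD : B ≠ D) (hCD : C ≠ D)
    (hsq : IsSquareFaceOf (orderPolytope P)
      (convexHull ℝ ({chi A, chi B, chi C, chi D} : Set (P → ℝ)))) :
    ∃ W X Y Z : Set P, ({W, X, Y, Z} : Set (Set P)) = {A, B, C, D} ∧
      W ⊆ X ∧ W ⊆ Y ∧ X ⊆ Z ∧ Y ⊆ Z ∧ ¬ X ⊆ Y ∧ ¬ Y ⊆ X := by
  set S : Set (P → ℝ) := {chi A, chi B, chi C, chi D} with hS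
  set F : Set (P → ℝ) := convexHull ℝ S with hF
  set 𝒜 : Set (Set P) := {A, B, C, D} with h𝒜
  obtain ⟨hface, hdim, hcard4⟩ := hsq
  have hFc : Convex ℝ F := convex_convexHull ℝ S
  have hFO : F ⊆ orderPolytope P := hface.1
  have hSmem : ∀ E : Set P, E ∈ 𝒜 → chi E ∈ S := by
    intro E hE
    rw [h𝒜] at hE
    simp only [Set.mem_insert_iff, Set.mem_singleton_iff] at hE
    rcases hE with rfl | rfl | rfl | rfl <;> simp [hS]
  have hAmem : ∀ E : Set P, chi E ∈ S → E ∈ 𝒜 := by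
    intro E hE
    rw [hS] at hE
    simp only [Set.mem_insert_iff, Set.mem_singleton_iff] at hE
    rw [h𝒜]
    rcases hE with h | h | h | h <;> simp [chi_inj h]
  have hupp : ∀ E : Set P, E ∈ 𝒜 → IsUpperSet E := by
    intro E hE
    rw [h𝒜] at hE
    simp only [Set.mem_insert_iff, Set.mem_singleton_iff] at hE
    rcases hE with rfl | rfl | rfl | rfl <;> assumption
  have hchiF : ∀ E ∈ 𝒜, chi E ∈ F := fun E hE => subset_convexHull ℝ S (hSmem E hE)
  -- closure of the family under ∩ and ∪ for incomparable pairs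
  have hclose : ∀ X' ∈ 𝒜, ∀ Y' ∈ 𝒜, ¬ X' ⊆ Y' → ¬ Y' ⊆ X' →
      X' ∩ Y' ∈ 𝒜 ∧ X' ∪ Y' ∈ 𝒜 := by
    intro X hX Y hY hXY hYX
    have hmid : (1/2 : ℝ) • chi X + (1/2 : ℝ) • chi Y ∈ F :=
      hFc (hchiF X hX) (hchiF Y hY) (by norm_num) (by norm_num) (by norm_num)
    have hseg : (1/2 : ℝ) • chi X + (1/2 : ℝ) • chi Y ∈
        openSegment ℝ (chi (X ∩ Y)) (chi (X ∪ Y)) := by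
      refine ⟨1/2, 1/2, by norm_num, by norm_num, by norm_num, ?_⟩
      rw [← smul_add, ← smul_add, chi_add_chi]
    have hext := And.intro (hface.2 (chi_mem_orderPolytope ((hupp X hX).inter (hupp Y hY)))
      (chi_mem_orderPolytope ((hupp X hX).union (hupp Y hY))) hmid hseg)
      (hface.right_mem_of_mem_openSegment (chi_mem_orderPolytope ((hupp X hX).inter (hupp Y hY)))
      (chi_mem_orderPolytope ((hupp X hX).union (hupp Y hY))) hmid hseg)
    have h1 := chi_extremePoint hFO hext.1
    have h2 := chi_extremePoint hFO hext.2
    rw [hF] at h1 h2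
    exact ⟨hAmem _ (extremePoints_convexHull_subset h1),
           hAmem _ (extremePoints_convexHull_subset h2)⟩
  -- the four characteristic vectors as a family
  set V : Fin 4 → Set P := ![A, B, C, D] with hV
  have hVmem : ∀ i, V i ∈ 𝒜 := by
    intro i; fin_cases i <;> simp [hV, h𝒜]
  have hVinj : Function.Injective V := by
    intro i j h
    fin_cases i <;> fin_cases j <;> simp [hV] at h ⊢ <;> tauto
  have hrange : Set.range (fun i => chi (V i)) = S := by
    apply subset_antisymm
    · rintro x ⟨i, rfl⟩; exact hSmem _ (hVmem i)
    · intro x hx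
      rw [hS] at hx
      simp only [Set.mem_insert_iff, Set.mem_singleton_iff] at hx
      rcases hx with rfl | rfl | rfl | rfl
      exacts [⟨0, by simp [hV]⟩, ⟨1, by simp [hV]⟩, ⟨2, by simp [hV]⟩, ⟨3, by simp [hV]⟩]
  have hnAI : ¬ AffineIndependent ℝ (fun i => chi (V i)) := by
    intro hAI
    have h3 := hAI.finrank_vectorSpan (n := 3) (by simp)
    rw [hrange] at h3
    have hdim' : Module.finrank ℝ (vectorSpan ℝ F) = 2 := hdim
    have hvs : vectorSpan ℝ F = vectorSpan ℝ S := by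
      rw [hF, ← direction_affineSpan, affineSpan_convexHull, direction_affineSpan]
    rw [hvs, h3] at hdim'
    norm_num at hdim'
  have hqE : ∀ i, chi (V i) ∈ F.extremePoints ℝ :=
    fun i => chi_extremePoint hFO (hchiF _ (hVmem i))
  have hqinj : Function.Injective (fun i => chi (V i)) :=
    fun i j h => hVinj (chi_inj h)
  obtain ⟨i₁, i₂, j₁, j₂, a, b, c, d, hi12, hj12, h11, h12, h21, h22,
    ha, hb, hcp, hdp, habcd, heq⟩ := two_two hFc hqE hqinj hnAI
  have hWX : V i₁ ≠ V i₂ := fun h => hi12 (hVinj h)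
  have hWY : V i₁ ≠ V j₁ := fun h => h11 (hVinj h)
  have hWZ : V i₁ ≠ V j₂ := fun h => h12 (hVinj h)
  have hXY : V i₂ ≠ V j₁ := fun h => h21 (hVinj h)
  have hXZ : V i₂ ≠ V j₂ := fun h => h22 (hVinj h)
  -- find an incomparable pair
  have hpairs : ∃ U₁ U₂ : Set P, U₁ ∈ 𝒜 ∧ U₂ ∈ 𝒜 ∧ ¬ U₁ ⊆ U₂ ∧ ¬ U₂ ⊆ U₁ := by
    have hYZcase : ¬ V j₁ ⊆ V j₂ → ¬ V j₂ ⊆ V j₁ →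
        ∃ U₁ U₂ : Set P, U₁ ∈ 𝒜 ∧ U₂ ∈ 𝒜 ∧ ¬ U₁ ⊆ U₂ ∧ ¬ U₂ ⊆ U₁ :=
      fun h1 h2 => ⟨V j₁, V j₂, hVmem j₁, hVmem j₂, h1, h2⟩
    by_cases hWX1 : V i₁ ⊆ V i₂
    · by_cases hYZ1 : V j₁ ⊆ V j₂
      · exact absurd (pair_eq ha hb hcp hdp habcd hWX1 hYZ1 heq).1 hWY
      · by_cases hZY : V j₂ ⊆ V j₁
        · exact absurd (pair_eq ha hb hdp hcp (by linarith) hWX1 hZY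
            (heq.trans (add_comm _ _))).1 hWZ
        · exact hYZcase hYZ1 hZY
    · by_cases hXW : V i₂ ⊆ V i₁
      · by_cases hYZ1 : V j₁ ⊆ V j₂
        · exact absurd (pair_eq hb ha hcp hdp (by linarith) hXW hYZ1
            ((add_comm (b • chi (V i₂)) (a • chi (V i₁))).trans heq)).1 hXY
        · by_cases hZY : V j₂ ⊆ V j₁
          · exact absurd (pair_eq hb ha hdp hcp (by linarith) hXW hZY
              (((add_comm (b • chi (V i₂)) (a • chi (V i₁))).trans heq).trans
                (add_comm _ _))).1 hXZ
          · exact hYZcase hYZ1 hZY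
      · exact ⟨V i₁, V i₂, hVmem i₁, hVmem i₂, hWX1, hXW⟩
  obtain ⟨U₁, U₂, hU₁, hU₂, h12', h21'⟩ := hpairs
  obtain ⟨hImem, hUmem⟩ := hclose U₁ hU₁ U₂ hU₂ h12' h21'
  have hne1 : U₁ ∩ U₂ ≠ U₁ := fun h => h12' (Set.inter_eq_left.mp h)
  have hne2 : U₁ ∩ U₂ ≠ U₂ := fun h => h21' (Set.inter_eq_right.mp h)
  have hne3 : U₁ ∩ U₂ ≠ U₁ ∪ U₂ := fun h =>
    h12' (Set.subset_union_left.trans (h.symm.subset.trans Set.inter_subset_right))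
  have hne4 : U₁ ≠ U₂ := fun h => h12' (h ▸ subset_rfl)
  have hne5 : U₁ ≠ U₁ ∪ U₂ := fun h => h21' (Set.union_eq_left.mp h.symm)
  have hne6 : U₂ ≠ U₁ ∪ U₂ := fun h => h12' (Set.union_eq_right.mp h.symm)
  refine ⟨U₁ ∩ U₂, U₁, U₂, U₁ ∪ U₂, ?_, Set.inter_subset_left, Set.inter_subset_right,
    Set.subset_union_left, Set.subset_union_right, h12', h21'⟩
  have hsub : ({U₁ ∩ U₂, U₁, U₂, U₁ ∪ U₂} : Set (Set P)) ⊆ 𝒜 := by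
    intro x hx
    simp only [Set.mem_insert_iff, Set.mem_singleton_iff] at hx
    rcases hx with rfl | rfl | rfl | rfl
    exacts [hImem, hU₁, hU₂, hUmem]
  have hcard1 : ({U₁ ∩ U₂, U₁, U₂, U₁ ∪ U₂} : Set (Set P)).ncard = 4 := by
    rw [Set.ncard_insert_of_notMem (by simp [hne1, hne2, hne3]),
        Set.ncard_insert_of_notMem (by simp [hne4, hne5]),
        Set.ncard_insert_of_notMem (by simp [hne6]), Set.ncard_singleton]
  have hcard2 : 𝒜.ncard = 4 := by
    rw [h𝒜, Set.ncard_insert_of_notMem (by simp [hAB, hAC, hAD]),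
        Set.ncard_insert_of_notMem (by simp [hBC, hBD]),
        Set.ncard_insert_of_notMem (by simp [hCD]), Set.ncard_singleton]
  exact Set.eq_of_subset_of_ncard_le hsub (by rw [hcard1, hcard2]) (Set.toFinite _)
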